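/- Let F_q be a finite field with more than 2 elements, q = |F_q|, and let n ≤ q be a positive integer. Fix n distinct elements x_1, ..., x_n ∈ F_q and, for 1 ≤ k ≤ n, let RS_k = {(f(x_1), ..., f(x_n)) : f ∈ F_q[X], deg f < k} denote the Reed–Solomon code of dimension k. Let 1 ≤ k_z ≤ k_b ≤ k_a ≤ n and let α ∈ F_q with α ≠ 0 and α ≠ 1. Then the code C = {(a | a+b | a+αb+z) : a ∈ RS_{k_a}, b ∈ RS_{k_b}, z ∈ RS_{k_z}} ⊆ F_q^{3n} is a linear code of length 3n, dimension k_a + k_b + k_z, and minimum distance exactly min{3(n−k_a+1), 2(n−k_b+1), n−k_z+1}. -/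

import Mathlib

open Polynomial Finset
set_option linter.unusedSectionVars false
set_option linter.unusedVariables false
set_option maxHeartbeats 1000000

/-- Concatenation `(u | v | w)` of three vectors of length `n` into a vector of length `3n`. -/
def cat3 {F : Type*} {n : ℕ} (u v w : Fin n → F) : Fin (n + n + n) → F :=
  Fin.append (Fin.append u v) w

/-- `d` is the minimum distance of the (nonzero) linear code `C`: it is the least element of
the set of Hamming weights of nonzero codewords of `C`. -/
def IsMinDist {F : Type*} [Field F] [DecidableEq F] {m : ℕ}
    (C : Submodule F (Fin m → F)) (d : ℕ) : Prop :=
  IsLeast {w : ℕ | ∃ c ∈ C, c ≠ 0 ∧ hammingNorm c = w} d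

/-- The Reed–Solomon code of length `n` and dimension `k` over `F`, with (distinct)
evaluation points `x 0, …, x (n-1)`: all evaluation vectors of polynomials of degree `< k`. -/
def RSCode {F : Type*} [Field F] {n : ℕ} (x : Fin n → F) (k : ℕ) : Set (Fin n → F) :=
  {c | ∃ f : Polynomial F, f.degree < (k : WithBot ℕ) ∧ ∀ i, c i = f.eval (x i)}

section aux
variable {F : Type*} [Field F] [DecidableEq F] {n : ℕ}

lemma append_add {m m' : ℕ} (u u' : Fin m → F) (v v' : Fin m' → F) :
    Fin.append (u + u') (v + v') = Fin.append u v + Fin.append u' v' := by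
  funext i
  induction i using Fin.addCases <;> simp [Fin.append_left, Fin.append_right]

lemma append_smul {m m' : ℕ} (c : F) (u : Fin m → F) (v : Fin m' → F) :
    Fin.append (c • u) (c • v) = c • Fin.append u v := by
  funext i
  induction i using Fin.addCases <;> simp [Fin.append_left, Fin.append_right]

lemma cat3_add (u v w u' v' w' : Fin n → F) :
    cat3 (u + u') (v + v') (w + w') = cat3 u v w + cat3 u' v' w' := by
  unfold cat3; rw [append_add, append_add]

lemma cat3_smul (c : F) (u v w : Fin n → F) :
    cat3 (c • u) (c • v) (c • w) = c • cat3 u v w := by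
  unfold cat3; rw [append_smul, append_smul]

lemma cat3_zero : cat3 (0 : Fin n → F) 0 0 = 0 := by
  have := cat3_smul (0 : F) (0 : Fin n → F) 0 0
  simpa using this

lemma cat3_left (u v w : Fin n → F) (j : Fin n) :
    cat3 u v w (Fin.castAdd n (Fin.castAdd n j)) = u j := by
  simp [cat3, Fin.append_left]

lemma cat3_mid (u v w : Fin n → F) (j : Fin n) :
    cat3 u v w (Fin.castAdd n (Fin.natAdd n j)) = v j := by
  simp only [cat3, Fin.append_left, Fin.append_right]

lemma cat3_right (u v w : Fin n → F) (j : Fin n) :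
    cat3 u v w (Fin.natAdd (n + n) j) = w j := by
  simp [cat3, Fin.append_right]

lemma hN_eq_sum {m : ℕ} (v : Fin m → F) :
    hammingNorm v = ∑ i, if v i = 0 then 0 else 1 := by
  rw [hammingNorm, Finset.card_filter]
  exact Finset.sum_congr rfl fun i _ => by split_ifs with h <;> simp_all

lemma hN_append {m m' : ℕ} (u : Fin m → F) (v : Fin m' → F) :
    hammingNorm (Fin.append u v) = hammingNorm u + hammingNorm v := by
  simp [hN_eq_sum, Fin.sum_univ_add, Fin.append_left, Fin.append_right]

lemma hN_cat3 (u v w : Fin n → F) :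
    hammingNorm (cat3 u v w) = hammingNorm u + hammingNorm v + hammingNorm w := by
  simp [cat3, hN_append]

lemma hN_smul {m : ℕ} {c : F} (hc : c ≠ 0) (v : Fin m → F) :
    hammingNorm (c • v) = hammingNorm v := by
  simp [hN_eq_sum, hc]

/-- weight lower bound for nonzero RS codewords -/
lemma wt_lb (x : Fin n → F) (hx : Function.Injective x) {k : ℕ} (hk1 : 1 ≤ k) (hkn : k ≤ n)
    (f : F[X]) (hf : f ≠ 0) (hdeg : f.degree < (k : WithBot ℕ)) :
    n - k + 1 ≤ hammingNorm (fun i => f.eval (x i)) := by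
  classical
  have hnat : f.natDegree < k := (Polynomial.natDegree_lt_iff_degree_lt hf).2 hdeg
  set Z : Finset (Fin n) := Finset.univ.filter (fun i => f.eval (x i) = 0) with hZ
  have hcard : Z.card ≤ f.natDegree := by
    have hsub : Z.image x ⊆ f.roots.toFinset := by
      intro y hy
      simp only [Finset.mem_image] at hy
      obtain ⟨i, hi, rfl⟩ := hy
      simp only [hZ, Finset.mem_filter] at hi
      simp [Multiset.mem_toFinset, Polynomial.mem_roots hf, IsRoot.def, hi.2]
    have h1 : Z.card = (Z.image x).card := (Finset.card_image_of_injective Z hx).symm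
    calc Z.card = (Z.image x).card := h1
      _ ≤ f.roots.toFinset.card := Finset.card_le_card hsub
      _ ≤ Multiset.card f.roots := f.roots.toFinset_card_le
      _ ≤ f.natDegree := Polynomial.card_roots' f
  have hnorm : hammingNorm (fun i => f.eval (x i)) = n - Z.card := by
    rw [hammingNorm]
    have : ({i | f.eval (x i) ≠ 0} : Finset (Fin n)) = Zᶜ := by
      ext i; simp [hZ]
    rw [this, Finset.card_compl, Fintype.card_fin]
  omega

lemma eval_all_zero (x : Fin n → F) (hx : Function.Injective x) {k : ℕ} (hk1 : 1 ≤ k)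
    (hkn : k ≤ n) (f : F[X]) (hdeg : f.degree < (k : WithBot ℕ))
    (h0 : ∀ i, f.eval (x i) = 0) : f = 0 := by
  by_contra hf
  have := wt_lb x hx hk1 hkn f hf hdeg
  have hz : (fun i => f.eval (x i)) = (0 : Fin n → F) := funext fun i => h0 i
  rw [hz] at this
  simp [hammingNorm] at this

/-- existence of a codeword of weight exactly n - k + 1 -/
lemma exists_wt (x : Fin n → F) (hx : Function.Injective x) {k : ℕ} (hk1 : 1 ≤ k) (hkn : k ≤ n) :
    ∃ f : F[X], f.degree < (k : WithBot ℕ) ∧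
      hammingNorm (fun i => f.eval (x i)) = n - k + 1 ∧
      (fun i => f.eval (x i)) ≠ (0 : Fin n → F) := by
  classical
  obtain ⟨S, -, hScard⟩ := Finset.exists_subset_card_eq
    (show k - 1 ≤ (Finset.univ : Finset (Fin n)).card by simp; omega)
  refine ⟨∏ i ∈ S, (X - C (x i)), ?_, ?_, ?_⟩
  · have hmon : (∏ i ∈ S, (X - C (x i))).Monic :=
      monic_prod_of_monic _ _ fun i _ => monic_X_sub_C (x i)
    rw [← Polynomial.natDegree_lt_iff_degree_lt hmon.ne_zero,
      Polynomial.natDegree_prod _ _ (fun i _ => X_sub_C_ne_zero (x i))]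
    simp [Polynomial.natDegree_X_sub_C, hScard]
    omega
  · have key : ∀ j, (∏ i ∈ S, (X - C (x i))).eval (x j) = 0 ↔ j ∈ S := by
      intro j
      rw [Polynomial.eval_prod, Finset.prod_eq_zero_iff]
      constructor
      · rintro ⟨i, hi, hz⟩
        simp only [eval_sub, eval_X, eval_C, sub_eq_zero] at hz
        rwa [hx hz]
      · intro hj; exact ⟨j, hj, by simp⟩
    rw [hammingNorm]
    have : ({i | (fun j => (∏ i ∈ S, (X - C (x i))).eval (x j)) i ≠ 0} : Finset (Fin n)) = Sᶜ := by
      ext i; simp [key]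
    rw [this, Finset.card_compl, Fintype.card_fin, hScard]
    omega
  · intro h
    obtain ⟨j, hj⟩ : ∃ j : Fin n, j ∉ S := by
      by_contra hall
      push_neg at hall
      have : S = Finset.univ := Finset.eq_univ_iff_forall.2 hall
      rw [this] at hScard
      simp at hScard
      omega
    have := congrFun h j
    simp only [Pi.zero_apply] at this
    rw [Polynomial.eval_prod] at this
    rcases Finset.prod_eq_zero_iff.1 this with ⟨i, hi, hz⟩
    simp only [eval_sub, eval_X, eval_C, sub_eq_zero] at hz
    exact hj (hx hz ▸ hi)

end aux

def cat3L (F : Type*) [Field F] [DecidableEq F] (n : ℕ) :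
    ((Fin n → F) × (Fin n → F) × (Fin n → F)) →ₗ[F] (Fin (n + n + n) → F) where
  toFun p := cat3 p.1 p.2.1 p.2.2
  map_add' p q := cat3_add p.1 p.2.1 p.2.2 q.1 q.2.1 q.2.2
  map_smul' c p := cat3_smul c p.1 p.2.1 p.2.2

noncomputable def evalMap {F : Type*} [Field F] {n : ℕ} (x : Fin n → F) : F[X] →ₗ[F] (Fin n → F) :=
  LinearMap.pi fun i => Polynomial.leval (x i)

@[simp] lemma evalMap_apply {F : Type*} [Field F] {n : ℕ} (x : Fin n → F) (f : F[X]) (i : Fin n) :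
    evalMap x f i = f.eval (x i) := rfl

noncomputable def codeMap (F : Type*) [Field F] [DecidableEq F] (n ka kb kz : ℕ)
    (x : Fin n → F) (α : F) :
    ((Fin ka → F) × (Fin kb → F) × (Fin kz → F)) →ₗ[F] (Fin (n + n + n) → F) :=
  let A := (evalMap x) ∘ₗ (Polynomial.degreeLT F ka).subtype ∘ₗ
    (Polynomial.degreeLTEquiv F ka).symm.toLinearMap ∘ₗ LinearMap.fst F _ _
  let B := (evalMap x) ∘ₗ (Polynomial.degreeLT F kb).subtype ∘ₗ
    (Polynomial.degreeLTEquiv F kb).symm.toLinearMap ∘ₗ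
    (LinearMap.fst F _ _ ∘ₗ LinearMap.snd F _ _)
  let Z := (evalMap x) ∘ₗ (Polynomial.degreeLT F kz).subtype ∘ₗ
    (Polynomial.degreeLTEquiv F kz).symm.toLinearMap ∘ₗ
    (LinearMap.snd F _ _ ∘ₗ LinearMap.snd F _ _)
  (cat3L F n) ∘ₗ (LinearMap.prod A (LinearMap.prod (A + B) (A + α • B + Z)))

lemma codeMap_apply (F : Type*) [Field F] [DecidableEq F] (n ka kb kz : ℕ) (x : Fin n → F)
    (α : F) (p : (Fin ka → F) × (Fin kb → F) × (Fin kz → F)) :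
    codeMap F n ka kb kz x α p =
      cat3 (evalMap x ((Polynomial.degreeLTEquiv F ka).symm p.1 : F[X]))
        (evalMap x ((Polynomial.degreeLTEquiv F ka).symm p.1 : F[X]) +
          evalMap x ((Polynomial.degreeLTEquiv F kb).symm p.2.1 : F[X]))
        (evalMap x ((Polynomial.degreeLTEquiv F ka).symm p.1 : F[X]) +
          α • evalMap x ((Polynomial.degreeLTEquiv F kb).symm p.2.1 : F[X]) +
          evalMap x ((Polynomial.degreeLTEquiv F kz).symm p.2.2 : F[X])) := rfl

/-- Let `|F| > 2`, `0 < n ≤ |F|`, let `x : Fin n → F` be `n` distinct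
evaluation points, let `1 ≤ k_z ≤ k_b ≤ k_a ≤ n` and `α ∈ F` with `α ≠ 0`, `α ≠ 1`. Then
`C = {(a | a+b | a+αb+z) : a ∈ RS_{k_a}, b ∈ RS_{k_b}, z ∈ RS_{k_z}} ⊆ F^{3n}` is a linear
code of length `3n`, dimension `k_a + k_b + k_z`, and minimum distance exactly
`min {3(n−k_a+1), 2(n−k_b+1), n−k_z+1}`. -/
theorem stmt_6 (F : Type*) [Field F] [Fintype F] [DecidableEq F]
    (hF : 2 < Fintype.card F) (n : ℕ) (hn : 0 < n) (hnq : n ≤ Fintype.card F)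
    (x : Fin n → F) (hx : Function.Injective x)
    (ka kb kz : ℕ) (hkz : 1 ≤ kz) (hzb : kz ≤ kb) (hba : kb ≤ ka) (hka : ka ≤ n)
    (α : F) (hα0 : α ≠ 0) (hα1 : α ≠ 1) :
    ∃ C : Submodule F (Fin (n + n + n) → F),
      (C : Set (Fin (n + n + n) → F)) =
        {c | ∃ a ∈ RSCode x ka, ∃ b ∈ RSCode x kb, ∃ z ∈ RSCode x kz,
          c = cat3 a (a + b) (a + α • b + z)} ∧
      Module.finrank F C = ka + kb + kz ∧
      IsMinDist C (min (3 * (n - ka + 1)) (min (2 * (n - kb + 1)) (n - kz + 1))) := by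
  classical
  have hka1 : 1 ≤ ka := le_trans hkz (le_trans hzb hba)
  have hkb1 : 1 ≤ kb := le_trans hkz hzb
  have hkbn : kb ≤ n := le_trans hba hka
  have hkzn : kz ≤ n := le_trans hzb hkbn
  set L := codeMap F n ka kb kz x α with hLdef
  refine ⟨LinearMap.range L, ?_, ?_, ?_⟩
  -- set equality
  case refine_1 =>
    ext c
    simp only [SetLike.mem_coe, LinearMap.mem_range, Set.mem_setOf_eq]
    constructor
    · rintro ⟨p, rfl⟩
      rw [hLdef, codeMap_apply]
      refine ⟨_, ⟨_, Polynomial.mem_degreeLT.1 ((Polynomial.degreeLTEquiv F ka).symm p.1).2,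
          fun i => rfl⟩,
        _, ⟨_, Polynomial.mem_degreeLT.1 ((Polynomial.degreeLTEquiv F kb).symm p.2.1).2,
          fun i => rfl⟩,
        _, ⟨_, Polynomial.mem_degreeLT.1 ((Polynomial.degreeLTEquiv F kz).symm p.2.2).2,
          fun i => rfl⟩, rfl⟩
    · rintro ⟨a, ⟨f, hf, haf⟩, b, ⟨g, hg, hbg⟩, z, ⟨h, hh, hzh⟩, rfl⟩
      have ha' : a = evalMap x f := funext haf
      have hb' : b = evalMap x g := funext hbg
      have hz' : z = evalMap x h := funext hzh
      refine ⟨(Polynomial.degreeLTEquiv F ka ⟨f, Polynomial.mem_degreeLT.2 hf⟩,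
        Polynomial.degreeLTEquiv F kb ⟨g, Polynomial.mem_degreeLT.2 hg⟩,
        Polynomial.degreeLTEquiv F kz ⟨h, Polynomial.mem_degreeLT.2 hh⟩), ?_⟩
      rw [hLdef, codeMap_apply]
      simp only [LinearEquiv.symm_apply_apply]
      rw [ha', hb', hz']
  -- dimension
  case refine_2 =>
    have hker : ∀ p, L p = 0 → p = 0 := by
      intro p hp
      rw [hLdef, codeMap_apply] at hp
      set fa : F[X] := ((Polynomial.degreeLTEquiv F ka).symm p.1 : F[X]) with hfa
      set fb : F[X] := ((Polynomial.degreeLTEquiv F kb).symm p.2.1 : F[X]) with hfb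
      set fz : F[X] := ((Polynomial.degreeLTEquiv F kz).symm p.2.2 : F[X]) with hfz
      have hU : ∀ j, fa.eval (x j) = 0 := by
        intro j
        have := congrFun hp (Fin.castAdd n (Fin.castAdd n j))
        rw [cat3_left] at this
        simpa using this
      have hfa0 : fa = 0 := eval_all_zero x hx hka1 hka fa
        (Polynomial.mem_degreeLT.1 ((Polynomial.degreeLTEquiv F ka).symm p.1).2) hU
      have hV : ∀ j, fb.eval (x j) = 0 := by
        intro j
        have := congrFun hp (Fin.castAdd n (Fin.natAdd n j))
        rw [cat3_mid] at this
        simp only [Pi.add_apply, evalMap_apply, Pi.zero_apply] at this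
        rw [hfa0] at this
        simpa using this
      have hfb0 : fb = 0 := eval_all_zero x hx hkb1 hkbn fb
        (Polynomial.mem_degreeLT.1 ((Polynomial.degreeLTEquiv F kb).symm p.2.1).2) hV
      have hW : ∀ j, fz.eval (x j) = 0 := by
        intro j
        have := congrFun hp (Fin.natAdd (n + n) j)
        rw [cat3_right] at this
        simp only [Pi.add_apply, Pi.smul_apply, evalMap_apply, Pi.zero_apply,
          smul_eq_mul] at this
        rw [hfa0, hfb0] at this
        simpa using this
      have hfz0 : fz = 0 := eval_all_zero x hx hkz hkzn fz
        (Polynomial.mem_degreeLT.1 ((Polynomial.degreeLTEquiv F kz).symm p.2.2).2) hW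
      have h1 : p.1 = 0 := by
        have : (Polynomial.degreeLTEquiv F ka).symm p.1 = 0 := Subtype.ext hfa0
        rwa [LinearEquiv.map_eq_zero_iff] at this
      have h2 : p.2.1 = 0 := by
        have : (Polynomial.degreeLTEquiv F kb).symm p.2.1 = 0 := Subtype.ext hfb0
        rwa [LinearEquiv.map_eq_zero_iff] at this
      have h3 : p.2.2 = 0 := by
        have : (Polynomial.degreeLTEquiv F kz).symm p.2.2 = 0 := Subtype.ext hfz0
        rwa [LinearEquiv.map_eq_zero_iff] at this
      exact Prod.ext h1 (Prod.ext h2 h3)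
    have hinj : Function.Injective L :=
      LinearMap.ker_eq_bot.1 (LinearMap.ker_eq_bot'.2 hker)
    rw [LinearMap.finrank_range_of_inj hinj]
    simp [Module.finrank_prod, Module.finrank_fin_fun]
    ring
  -- min distance
  case refine_3 =>
    have hmem : ∀ c : Fin (n + n + n) → F, c ∈ LinearMap.range L ↔
        ∃ a ∈ RSCode x ka, ∃ b ∈ RSCode x kb, ∃ z ∈ RSCode x kz,
          c = cat3 a (a + b) (a + α • b + z) := by
      intro c
      constructor
      · rintro ⟨p, rfl⟩
        rw [hLdef, codeMap_apply]
        exact ⟨_, ⟨_, Polynomial.mem_degreeLT.1 ((Polynomial.degreeLTEquiv F ka).symm p.1).2,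
            fun i => rfl⟩,
          _, ⟨_, Polynomial.mem_degreeLT.1 ((Polynomial.degreeLTEquiv F kb).symm p.2.1).2,
            fun i => rfl⟩,
          _, ⟨_, Polynomial.mem_degreeLT.1 ((Polynomial.degreeLTEquiv F kz).symm p.2.2).2,
            fun i => rfl⟩, rfl⟩
      · rintro ⟨a, ⟨f, hf, haf⟩, b, ⟨g, hg, hbg⟩, z, ⟨h, hh, hzh⟩, rfl⟩
        have ha' : a = evalMap x f := funext haf
        have hb' : b = evalMap x g := funext hbg
        have hz' : z = evalMap x h := funext hzh
        refine ⟨(Polynomial.degreeLTEquiv F ka ⟨f, Polynomial.mem_degreeLT.2 hf⟩,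
          Polynomial.degreeLTEquiv F kb ⟨g, Polynomial.mem_degreeLT.2 hg⟩,
          Polynomial.degreeLTEquiv F kz ⟨h, Polynomial.mem_degreeLT.2 hh⟩), ?_⟩
        rw [hLdef, codeMap_apply]
        simp only [LinearEquiv.symm_apply_apply]
        rw [ha', hb', hz']
    have zeroRS : ∀ k : ℕ, (0 : Fin n → F) ∈ RSCode x k := by
      intro k
      refine ⟨0, ?_, by simp⟩
      rw [Polynomial.degree_zero]
      exact WithBot.bot_lt_coe k
    constructor
    · -- d is attained
      have cand1 : (3 * (n - ka + 1)) ∈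
          {w : ℕ | ∃ c ∈ LinearMap.range L, c ≠ 0 ∧ hammingNorm c = w} := by
        obtain ⟨f, hfd, hfw, hfne⟩ := exists_wt x hx hka1 hka
        refine ⟨cat3 (fun i => f.eval (x i)) (fun i => f.eval (x i)) (fun i => f.eval (x i)),
          (hmem _).2 ⟨_, ⟨f, hfd, fun i => rfl⟩, 0, zeroRS kb, 0, zeroRS kz, by simp⟩, ?_, ?_⟩
        · intro h0
          apply hfne
          funext j
          have := congrFun h0 (Fin.castAdd n (Fin.castAdd n j))
          rw [cat3_left] at this
          simpa using this
        · rw [hN_cat3, hfw]; omega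
      have cand2 : (2 * (n - kb + 1)) ∈
          {w : ℕ | ∃ c ∈ LinearMap.range L, c ≠ 0 ∧ hammingNorm c = w} := by
        obtain ⟨g, hgd, hgw, hgne⟩ := exists_wt x hx hkb1 hkbn
        refine ⟨cat3 0 (fun i => g.eval (x i)) (α • fun i => g.eval (x i)),
          (hmem _).2 ⟨0, zeroRS ka, _, ⟨g, hgd, fun i => rfl⟩, 0, zeroRS kz, by simp⟩, ?_, ?_⟩
        · intro h0
          apply hgne
          funext j
          have := congrFun h0 (Fin.castAdd n (Fin.natAdd n j))
          rw [cat3_mid] at this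
          simpa using this
        · rw [hN_cat3, hN_smul hα0, hgw, hammingNorm_zero]; omega
      have cand3 : (n - kz + 1) ∈
          {w : ℕ | ∃ c ∈ LinearMap.range L, c ≠ 0 ∧ hammingNorm c = w} := by
        obtain ⟨h, hhd, hhw, hhne⟩ := exists_wt x hx hkz hkzn
        refine ⟨cat3 0 0 (fun i => h.eval (x i)),
          (hmem _).2 ⟨0, zeroRS ka, 0, zeroRS kb, _, ⟨h, hhd, fun i => rfl⟩, by simp⟩, ?_, ?_⟩
        · intro h0
          apply hhne
          funext j
          have := congrFun h0 (Fin.natAdd (n + n) j)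
          rw [cat3_right] at this
          simpa using this
        · rw [hN_cat3, hhw, hammingNorm_zero]; omega
      have hd : min (3 * (n - ka + 1)) (min (2 * (n - kb + 1)) (n - kz + 1)) = 3 * (n - ka + 1) ∨
          min (3 * (n - ka + 1)) (min (2 * (n - kb + 1)) (n - kz + 1)) = 2 * (n - kb + 1) ∨
          min (3 * (n - ka + 1)) (min (2 * (n - kb + 1)) (n - kz + 1)) = n - kz + 1 := by
        omega
      rcases hd with hd | hd | hd <;> rw [hd]
      · exact cand1
      · exact cand2
      · exact cand3
    · -- lower bound
      rintro w ⟨c, hc, hcne, rfl⟩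
      obtain ⟨a, ⟨f, hf, haf⟩, b, ⟨g, hg, hbg⟩, z, ⟨h, hh, hzh⟩, rfl⟩ := (hmem c).1 hc
      rw [hN_cat3]
      by_cases hzz : z = 0
      · subst hzz
        by_cases hbb : b = 0
        · subst hbb
          have hane : a ≠ 0 := by
            intro h0
            apply hcne
            rw [h0]
            simpa using cat3_zero
          have hfne : f ≠ 0 := fun h0 => hane (by funext i; rw [haf i, h0]; simp)
          have ha' : a = fun i => f.eval (x i) := funext haf
          have h1 : n - ka + 1 ≤ hammingNorm a := ha' ▸ wt_lb x hx hka1 hka f hfne hf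
          simp only [add_zero, smul_zero]
          omega
        · have hgne : g ≠ 0 := fun h0 => hbb (by funext i; rw [hbg i, h0]; simp)
          have hb' : b = fun i => g.eval (x i) := funext hbg
          have h1 : n - kb + 1 ≤ hammingNorm b := hb' ▸ wt_lb x hx hkb1 hkbn g hgne hg
          have key : 2 * hammingNorm b ≤
              hammingNorm a + hammingNorm (a + b) + hammingNorm (a + α • b + 0) := by
            simp only [add_zero]
            rw [hN_eq_sum a, hN_eq_sum (a + b), hN_eq_sum (a + α • b), hN_eq_sum b,
              Finset.mul_sum, ← Finset.sum_add_distrib, ← Finset.sum_add_distrib]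
            apply Finset.sum_le_sum
            intro i _
            simp only [Pi.add_apply, Pi.smul_apply, smul_eq_mul]
            by_cases hbi : b i = 0
            · simp [hbi]
            have h12 : ¬(a i = 0 ∧ a i + b i = 0) := by
              rintro ⟨e1, e2⟩
              exact hbi (by linear_combination e2 - e1)
            have h13 : ¬(a i = 0 ∧ a i + α * b i = 0) := by
              rintro ⟨e1, e2⟩
              have hc' : α * b i = 0 := by linear_combination e2 - e1
              exact hbi ((mul_eq_zero.1 hc').resolve_left hα0)
            have h23 : ¬(a i + b i = 0 ∧ a i + α * b i = 0) := by
              rintro ⟨e1, e2⟩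
              have hc' : (α - 1) * b i = 0 := by linear_combination e2 - e1
              rcases mul_eq_zero.1 hc' with hc' | hc'
              · exact hα1 (sub_eq_zero.1 hc')
              · exact hbi hc'
            rw [if_neg hbi]
            split_ifs
            all_goals try omega
            all_goals
              first
                | exact absurd ⟨‹a i = 0›, ‹a i + b i = 0›⟩ h12
                | exact absurd ⟨‹a i = 0›, ‹a i + α * b i = 0›⟩ h13
                | exact absurd ⟨‹a i + b i = 0›, ‹a i + α * b i = 0›⟩ h23
          omega
      · have hhne : h ≠ 0 := fun h0 => hzz (by funext i; rw [hzh i, h0]; simp)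
        have hz' : z = fun i => h.eval (x i) := funext hzh
        have h1 : n - kz + 1 ≤ hammingNorm z := hz' ▸ wt_lb x hx hkz hkzn h hhne hh
        have key : hammingNorm z ≤
            hammingNorm a + hammingNorm (a + b) + hammingNorm (a + α • b + z) := by
          rw [hN_eq_sum a, hN_eq_sum (a + b), hN_eq_sum (a + α • b + z), hN_eq_sum z,
            ← Finset.sum_add_distrib, ← Finset.sum_add_distrib]
          apply Finset.sum_le_sum
          intro i _
          simp only [Pi.add_apply, Pi.smul_apply, smul_eq_mul]
          by_cases hzi : z i = 0
          · simp [hzi]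
          have hall : ¬(a i = 0 ∧ a i + b i = 0 ∧ a i + α * b i + z i = 0) := by
            rintro ⟨e1, e2, e3⟩
            have hb0 : b i = 0 := by linear_combination e2 - e1
            exact hzi (by linear_combination e3 - e1 - α * hb0)
          rw [if_neg hzi]
          split_ifs
          all_goals try omega
          all_goals
            exact absurd ⟨‹a i = 0›, ‹a i + b i = 0›, ‹a i + α * b i + z i = 0›⟩ hall
        omega
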